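/- Let r ≥ 1. Let (H_T)_{T∈ℕ} be a sequence of random symmetric r×r matrices with √T·H_T = O_p(1), and let (A_T)_{T∈ℕ} be a sequence of random r×r matrices with T(A_T A_Tᵀ − I_r) = O_p(1). Then T·(‖A_TᵀH_T A_T‖² − ‖H_T‖²) → 0 in probability as T → ∞. -/

import Mathlib

open MeasureTheory Filter Matrix Finset
open scoped Topology ENNReal NNReal Kronecker

noncomputable section

/-- Squared Frobenius norm of a real matrix. -/
def frobSq {ι κ : Type*} [Fintype ι] [Fintype κ] (M : Matrix ι κ ℝ) : ℝ :=
  ∑ i, ∑ j, (M i j) ^ 2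

/-- Frobenius norm of a real matrix. -/
def frobNorm {ι κ : Type*} [Fintype ι] [Fintype κ] (M : Matrix ι κ ℝ) : ℝ :=
  Real.sqrt (frobSq M)

/-- Euclidean norm of a vector. -/
def euclNorm {ι : Type*} [Fintype ι] (x : ι → ℝ) : ℝ :=
  Real.sqrt (∑ i, (x i) ^ 2)

/-- `X_T = O_p(1)` (boundedness in probability), matrix version, Frobenius norm. -/
def MatIsOp {Ω ι κ : Type*} [MeasurableSpace Ω] [Fintype ι] [Fintype κ]
    (μ : Measure Ω) (X : ℕ → Ω → Matrix ι κ ℝ) : Prop :=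
  ∀ ε : ℝ, 0 < ε → ∃ M : ℝ, 0 < M ∧ ∀ T, μ {ω | M < frobNorm (X T ω)} ≤ ENNReal.ofReal ε

/-- `X_T = O_p(1)` (boundedness in probability), vector version, Euclidean norm. -/
def VecIsOp {Ω ι : Type*} [MeasurableSpace Ω] [Fintype ι]
    (μ : Measure Ω) (X : ℕ → Ω → ι → ℝ) : Prop :=
  ∀ ε : ℝ, 0 < ε → ∃ M : ℝ, 0 < M ∧ ∀ T, μ {ω | M < euclNorm (X T ω)} ≤ ENNReal.ofReal ε

/-- Convergence to zero in probability, matrix version (Frobenius norm). -/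
def MatTendstoP0 {Ω ι κ : Type*} [MeasurableSpace Ω] [Fintype ι] [Fintype κ]
    (μ : Measure Ω) (X : ℕ → Ω → Matrix ι κ ℝ) : Prop :=
  ∀ ε : ℝ, 0 < ε → Tendsto (fun T => μ {ω | ε < frobNorm (X T ω)}) atTop (𝓝 0)

/-- Convergence to zero in probability, real-valued version. -/
def RealTendstoP0 {Ω : Type*} [MeasurableSpace Ω]
    (μ : Measure Ω) (X : ℕ → Ω → ℝ) : Prop :=
  ∀ ε : ℝ, 0 < ε → Tendsto (fun T => μ {ω | ε < |X T ω|}) atTop (𝓝 0)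

/-- Convergence in distribution: weak convergence of the laws to the measure `ν`. -/
def TendstoInDist {Ω E : Type*} [MeasurableSpace Ω] [MeasurableSpace E] [TopologicalSpace E]
    (μ : Measure Ω) (X : ℕ → Ω → E) (ν : Measure E) : Prop :=
  ∀ f : BoundedContinuousFunction E ℝ,
    Tendsto (fun T => ∫ ω, f (X T ω) ∂μ) atTop (𝓝 (∫ x, f x ∂ν))

/-- The square root of a positive semidefinite matrix, as `Matrix.PosSemidef.sqrt` was defined
in the older Mathlib. -/
def posSemidefSqrt {ι : Type*} [Fintype ι] [DecidableEq ι] {A : Matrix ι ι ℝ}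
    (hA : A.PosSemidef) : Matrix ι ι ℝ :=
  hA.1.eigenvectorUnitary.1 * diagonal ((↑) ∘ (Real.sqrt ∘ hA.1.eigenvalues)) *
  (star hA.1.eigenvectorUnitary : Matrix ι ι ℝ)

open Classical in
/-- The centered (possibly degenerate) Gaussian distribution `N(0, V)` on `ι → ℝ`,
realized as the law of `V^{1/2} z` with `z` standard Gaussian. -/
def gaussianOfCov {ι : Type*} [Fintype ι] [DecidableEq ι] (V : Matrix ι ι ℝ) :
    Measure (ι → ℝ) :=
  if h : V.PosSemidef then
    Measure.map (fun z => (posSemidefSqrt h).mulVec z)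
      (Measure.pi fun _ : ι => ProbabilityTheory.gaussianReal 0 1)
  else 0

/-- Chi-squared distribution with `k` degrees of freedom: Gamma, shape `k/2`, rate `1/2`. -/
def chiSq (k : ℝ) : Measure ℝ := ProbabilityTheory.gammaMeasure (k / 2) (1 / 2)

open Classical in
/-- Inverse of the unique symmetric positive definite square root of `S`
(junk value `0` if `S` is not positive definite). -/
def invSqrt {ι : Type*} [Fintype ι] [DecidableEq ι] (S : Matrix ι ι ℝ) : Matrix ι ι ℝ :=
  if h : S.PosDef then (posSemidefSqrt h.posSemidef)⁻¹ else 0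

/-- Column-vectorization of an `r × r` matrix, indexed by (column, row) pairs. -/
def vecM {r : ℕ} (M : Matrix (Fin r) (Fin r) ℝ) : Fin r × Fin r → ℝ :=
  fun q => M q.2 q.1

/-- The commutation matrix `K_rr = ∑ i j, E_r^{ij} ⊗ E_r^{ji}`. -/
def commMatrix (r : ℕ) : Matrix (Fin r × Fin r) (Fin r × Fin r) ℝ :=
  ∑ i : Fin r, ∑ j : Fin r, single i j (1 : ℝ) ⊗ₖ single j i (1 : ℝ)

/-- The matrix `D_rr = ∑ i, E_r^{ii} ⊗ E_r^{ii}`. -/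
def dblDiagMatrix (r : ℕ) : Matrix (Fin r × Fin r) (Fin r × Fin r) ℝ :=
  ∑ i : Fin r, single i i (1 : ℝ) ⊗ₖ single i i (1 : ℝ)

/-- The all-ones matrix `J_r`. -/
def onesMat (r : ℕ) : Matrix (Fin r) (Fin r) ℝ := Matrix.of fun _ _ => 1


section Aux

variable {ι κ : Type*} [Fintype ι] [Fintype κ]

lemma frobSq_nonneg (M : Matrix ι κ ℝ) : 0 ≤ frobSq M :=
  Finset.sum_nonneg fun _ _ => Finset.sum_nonneg fun _ _ => sq_nonneg _

lemma frobNorm_nonneg (M : Matrix ι κ ℝ) : 0 ≤ frobNorm M := Real.sqrt_nonneg _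

lemma frobNorm_sq (M : Matrix ι κ ℝ) : frobNorm M ^ 2 = frobSq M :=
  Real.sq_sqrt (frobSq_nonneg M)

lemma frobSq_eq_trace (M : Matrix ι κ ℝ) : frobSq M = (Mᵀ * M).trace := by
  simp only [frobSq, Matrix.trace, Matrix.diag, Matrix.mul_apply, Matrix.transpose_apply, sq]
  exact Finset.sum_comm

lemma abs_trace_transpose_mul_le (M N : Matrix ι κ ℝ) :
    |(Mᵀ * N).trace| ≤ frobNorm M * frobNorm N := by
  have h1 : (Mᵀ * N).trace = ∑ p : ι × κ, M p.1 p.2 * N p.1 p.2 := by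
    simp only [Matrix.trace, Matrix.diag, Matrix.mul_apply, Matrix.transpose_apply,
      Fintype.sum_prod_type]
    exact Finset.sum_comm
  rw [h1]
  have h2 : |∑ p : ι × κ, M p.1 p.2 * N p.1 p.2| ≤ ∑ p : ι × κ, |M p.1 p.2| * |N p.1 p.2| := by
    refine (Finset.abs_sum_le_sum_abs _ _).trans (le_of_eq ?_)
    simp [abs_mul]
  refine h2.trans ?_
  have h3 := Finset.sum_mul_sq_le_sq_mul_sq Finset.univ (fun p : ι × κ => |M p.1 p.2|)
    (fun p => |N p.1 p.2|)
  have hL : 0 ≤ ∑ p : ι × κ, |M p.1 p.2| * |N p.1 p.2| :=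
    Finset.sum_nonneg fun _ _ => mul_nonneg (abs_nonneg _) (abs_nonneg _)
  have h4 := (Real.le_sqrt hL (by positivity)).2 h3
  rw [Real.sqrt_mul (by positivity)] at h4
  have e1 : Real.sqrt (∑ p : ι × κ, |M p.1 p.2| ^ 2) = frobNorm M := by
    simp [frobNorm, frobSq, sq_abs, Fintype.sum_prod_type]
  have e2 : Real.sqrt (∑ p : ι × κ, |N p.1 p.2| ^ 2) = frobNorm N := by
    simp [frobNorm, frobSq, sq_abs, Fintype.sum_prod_type]
  rwa [e1, e2] at h4

lemma frobSq_mul_le {l : Type*} [Fintype l] (M : Matrix ι κ ℝ) (N : Matrix κ l ℝ) :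
    frobSq (M * N) ≤ frobSq M * frobSq N := by
  have key : ∀ i k, ((M * N) i k) ^ 2 ≤ (∑ j, M i j ^ 2) * (∑ j, N j k ^ 2) := fun i k => by
    simpa [Matrix.mul_apply] using
      Finset.sum_mul_sq_le_sq_mul_sq Finset.univ (fun j => M i j) (fun j => N j k)
  calc frobSq (M * N) = ∑ i, ∑ k, ((M * N) i k) ^ 2 := rfl
    _ ≤ ∑ i : ι, ∑ k : l, (∑ j, M i j ^ 2) * (∑ j, N j k ^ 2) :=
        Finset.sum_le_sum fun i _ => Finset.sum_le_sum fun k _ => key i k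
    _ = ∑ i : ι, (∑ j, M i j ^ 2) * frobSq N := by
        refine Finset.sum_congr rfl fun i _ => ?_
        rw [← Finset.mul_sum]
        congr 1
        exact Finset.sum_comm
    _ = frobSq M * frobSq N := by simp only [frobSq, Finset.sum_mul]

lemma frobNorm_mul_le {l : Type*} [Fintype l] (M : Matrix ι κ ℝ) (N : Matrix κ l ℝ) :
    frobNorm (M * N) ≤ frobNorm M * frobNorm N := by
  rw [frobNorm, frobNorm, frobNorm, ← Real.sqrt_mul (frobSq_nonneg M)]
  exact Real.sqrt_le_sqrt (frobSq_mul_le M N)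

lemma frobNorm_smul (c : ℝ) (M : Matrix ι κ ℝ) : frobNorm (c • M) = |c| * frobNorm M := by
  have h : frobSq (c • M) = c ^ 2 * frobSq M := by
    simp [frobSq, Matrix.smul_apply, smul_eq_mul, mul_pow, Finset.mul_sum]
  rw [frobNorm, h, Real.sqrt_mul (sq_nonneg c), Real.sqrt_sq_eq_abs, frobNorm]

lemma key_bound {n : Type*} [Fintype n] [DecidableEq n] (Hm A : Matrix n n ℝ)
    (hs : Hmᵀ = Hm) :
    |frobSq (Aᵀ * Hm * A) - frobSq Hm| ≤
      2 * (frobNorm Hm ^ 2 * frobNorm (A * Aᵀ - 1))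
        + frobNorm Hm ^ 2 * frobNorm (A * Aᵀ - 1) ^ 2 := by
  set B := A * Aᵀ - 1 with hB
  have hBsym : Bᵀ = B := by
    simp [hB, Matrix.transpose_sub, Matrix.transpose_mul, Matrix.transpose_one]
  have hS : A * Aᵀ = 1 + B := by rw [hB]; abel
  -- step 1: express difference via traces
  have hT : (Aᵀ * Hm * A)ᵀ = Aᵀ * Hm * A := by
    simp [Matrix.transpose_mul, hs, Matrix.mul_assoc]
  have t1 : frobSq (Aᵀ * Hm * A) = ((Hm * (A * Aᵀ)) * (Hm * (A * Aᵀ))).trace := by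
    rw [frobSq_eq_trace, hT]
    simp only [Matrix.mul_assoc]
    rw [Matrix.trace_mul_comm]
    simp [Matrix.mul_assoc]
  have t0 : frobSq Hm = (Hm * Hm).trace := by rw [frobSq_eq_trace, hs]
  have expand : (Hm * (1 + B)) * (Hm * (1 + B))
      = Hm * Hm + Hm * Hm * B + Hm * B * Hm + Hm * B * (Hm * B) := by
    noncomm_ring
  have t2 : (Hm * B * Hm).trace = (Hm * Hm * B).trace := by
    rw [Matrix.trace_mul_comm (Hm * B) Hm, ← Matrix.mul_assoc]
  have diff : frobSq (Aᵀ * Hm * A) - frobSq Hm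
      = 2 * (Hm * Hm * B).trace + (Hm * B * (Hm * B)).trace := by
    rw [t1, t0, hS, expand, Matrix.trace_add, Matrix.trace_add, Matrix.trace_add, t2]
    ring
  -- step 2: bound the traces
  have hHH : (Hm * Hm)ᵀ = Hm * Hm := by rw [Matrix.transpose_mul, hs]
  have b1 : |(Hm * Hm * B).trace| ≤ frobNorm Hm ^ 2 * frobNorm B := by
    have := abs_trace_transpose_mul_le (Hm * Hm) B
    rw [hHH] at this
    refine this.trans ?_
    have := frobNorm_mul_le Hm Hm
    nlinarith [frobNorm_nonneg B, frobNorm_nonneg (Hm * Hm), frobNorm_nonneg Hm]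
  have hBH : (B * Hm)ᵀ = Hm * B := by rw [Matrix.transpose_mul, hs, hBsym]
  have b2 : |(Hm * B * (Hm * B)).trace| ≤ frobNorm Hm ^ 2 * frobNorm B ^ 2 := by
    have h := abs_trace_transpose_mul_le (B * Hm) (Hm * B)
    rw [hBH] at h
    refine h.trans ?_
    have h1 := frobNorm_mul_le B Hm
    have h2 := frobNorm_mul_le Hm B
    nlinarith [frobNorm_nonneg B, frobNorm_nonneg Hm, frobNorm_nonneg (B * Hm),
      frobNorm_nonneg (Hm * B)]
  calc |frobSq (Aᵀ * Hm * A) - frobSq Hm|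
      = |2 * (Hm * Hm * B).trace + (Hm * B * (Hm * B)).trace| := by rw [diff]
    _ ≤ 2 * |(Hm * Hm * B).trace| + |(Hm * B * (Hm * B)).trace| := by
        calc _ ≤ |2 * (Hm * Hm * B).trace| + |(Hm * B * (Hm * B)).trace| := abs_add_le _ _
          _ = _ := by rw [abs_mul, abs_two]
    _ ≤ 2 * (frobNorm Hm ^ 2 * frobNorm B) + frobNorm Hm ^ 2 * frobNorm B ^ 2 := by
        nlinarith

end Aux

set_option maxHeartbeats 1000000 in
theorem statement12 {Ω : Type*} [MeasurableSpace Ω] (μ : Measure Ω) [IsProbabilityMeasure μ]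
    (r : ℕ) (hr : 1 ≤ r)
    (H : ℕ → Ω → Matrix (Fin r) (Fin r) ℝ)
    (hHmeas : ∀ T i j, Measurable fun ω => H T ω i j)
    (hHsym : ∀ T ω, (H T ω)ᵀ = H T ω)
    (hHop : MatIsOp μ fun T ω => Real.sqrt T • H T ω)
    (A : ℕ → Ω → Matrix (Fin r) (Fin r) ℝ)
    (hAmeas : ∀ T i j, Measurable fun ω => A T ω i j)
    (hAop : MatIsOp μ fun T ω => (T : ℝ) • (A T ω * (A T ω)ᵀ - 1)) :
    RealTendstoP0 μ fun T ω =>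
      (T : ℝ) * (frobSq ((A T ω)ᵀ * H T ω * A T ω) - frobSq (H T ω)) := by
  intro ε hε
  rw [ENNReal.tendsto_nhds_zero]
  intro η hη
  -- choose a real δ with ofReal δ + ofReal δ ≤ η
  obtain ⟨δ, hδ, hδη⟩ : ∃ δ : ℝ, 0 < δ ∧
      ENNReal.ofReal δ + ENNReal.ofReal δ ≤ η := by
    rcases eq_or_ne η ⊤ with h | h
    · exact ⟨1, one_pos, by simp [h]⟩
    · have hpos : 0 < η.toReal := ENNReal.toReal_pos hη.ne' h
      refine ⟨η.toReal / 4, by linarith, ?_⟩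
      rw [← ENNReal.ofReal_add (by linarith) (by linarith)]
      calc ENNReal.ofReal (η.toReal / 4 + η.toReal / 4)
          ≤ ENNReal.ofReal η.toReal := ENNReal.ofReal_le_ofReal (by
            have := ENNReal.toReal_nonneg (a := η); linarith)
        _ = η := ENNReal.ofReal_toReal h
  obtain ⟨Ma, hMa, hMaB⟩ := hHop δ hδ
  obtain ⟨Mb, hMb, hMbB⟩ := hAop δ hδ
  set C : ℝ := Ma ^ 2 * (2 * Mb + Mb ^ 2) with hC
  have hC0 : 0 < C := mul_pos (pow_pos hMa 2) (by nlinarith)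
  obtain ⟨N, hN⟩ := exists_nat_gt (max 1 (C / ε))
  filter_upwards [eventually_ge_atTop N] with T hTN
  have hT1 : (1 : ℝ) ≤ T :=
    le_trans ((le_max_left 1 (C / ε)).trans hN.le) (Nat.cast_le.2 hTN)
  have hTC : C < ε * T := by
    have h1 : C / ε < (T : ℝ) :=
      lt_of_lt_of_le (lt_of_le_of_lt (le_max_right 1 (C / ε)) hN) (Nat.cast_le.2 hTN)
    calc C = (C / ε) * ε := (div_mul_cancel₀ _ hε.ne').symm
      _ < T * ε := by exact mul_lt_mul_of_pos_right h1 hε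
      _ = ε * T := mul_comm _ _
  -- subset argument
  have hsub : {ω | ε < |(T : ℝ) * (frobSq ((A T ω)ᵀ * H T ω * A T ω) - frobSq (H T ω))|}
      ⊆ {ω | Ma < frobNorm (Real.sqrt T • H T ω)}
        ∪ {ω | Mb < frobNorm ((T : ℝ) • (A T ω * (A T ω)ᵀ - 1))} := by
    intro ω hω
    by_contra hcon
    simp only [Set.mem_union, Set.mem_setOf_eq, not_or, not_lt] at hcon
    obtain ⟨ha, hb⟩ := hcon
    simp only [Set.mem_setOf_eq] at hω ha hb
    set u := frobNorm (H T ω) with hu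
    set v := frobNorm (A T ω * (A T ω)ᵀ - 1) with hv
    have hu0 : 0 ≤ u := frobNorm_nonneg _
    have hv0 : 0 ≤ v := frobNorm_nonneg _
    have ha' : Real.sqrt T * u ≤ Ma := by
      rwa [frobNorm_smul, abs_of_nonneg (Real.sqrt_nonneg _)] at ha
    have hb' : (T : ℝ) * v ≤ Mb := by
      rwa [frobNorm_smul, abs_of_nonneg (by positivity)] at hb
    have hTu2 : (T : ℝ) * u ^ 2 ≤ Ma ^ 2 := by
      have h := mul_self_le_mul_self (mul_nonneg (Real.sqrt_nonneg _) hu0) ha'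
      have hsq : Real.sqrt T * Real.sqrt T = (T : ℝ) := Real.mul_self_sqrt (by positivity)
      nlinarith
    have hkey := key_bound (H T ω) (A T ω) (hHsym T ω)
    have habs : |(T : ℝ) * (frobSq ((A T ω)ᵀ * H T ω * A T ω) - frobSq (H T ω))|
        ≤ (T : ℝ) * (2 * (u ^ 2 * v) + u ^ 2 * v ^ 2) := by
      rw [abs_mul, abs_of_nonneg (by positivity : (0:ℝ) ≤ (T : ℝ))]
      exact mul_le_mul_of_nonneg_left hkey (by positivity)
    have hv1 : v ≤ Mb := le_trans (le_mul_of_one_le_left hv0 hT1) hb'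
    have h1 : (T : ℝ) ^ 2 * (u ^ 2 * v) ≤ Ma ^ 2 * Mb := by
      nlinarith [mul_le_mul hTu2 hb' (mul_nonneg (by positivity) hv0) (sq_nonneg Ma)]
    have h2 : (T : ℝ) ^ 2 * (u ^ 2 * v ^ 2) ≤ Ma ^ 2 * Mb ^ 2 := by
      have := mul_le_mul h1 hv1 hv0 (by positivity : (0:ℝ) ≤ Ma ^ 2 * Mb)
      nlinarith [this]
    have hT0 : (0 : ℝ) < T := by linarith
    have h3 : (T : ℝ) * ((T : ℝ) * (2 * (u ^ 2 * v) + u ^ 2 * v ^ 2)) < (T : ℝ) * ε := by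
      have hC' : Ma ^ 2 * (2 * Mb + Mb ^ 2) < ε * T := hTC
      linarith [h1, h2]
    have hlt : (T : ℝ) * (2 * (u ^ 2 * v) + u ^ 2 * v ^ 2) < ε :=
      lt_of_mul_lt_mul_left h3 hT0.le
    linarith [hω.trans_le habs]
  calc μ {ω | ε < |(T : ℝ) * (frobSq ((A T ω)ᵀ * H T ω * A T ω) - frobSq (H T ω))|}
      ≤ μ ({ω | Ma < frobNorm (Real.sqrt T • H T ω)}
          ∪ {ω | Mb < frobNorm ((T : ℝ) • (A T ω * (A T ω)ᵀ - 1))}) := measure_mono hsub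
    _ ≤ μ {ω | Ma < frobNorm (Real.sqrt T • H T ω)}
        + μ {ω | Mb < frobNorm ((T : ℝ) • (A T ω * (A T ω)ᵀ - 1))} := measure_union_le _ _
    _ ≤ ENNReal.ofReal δ + ENNReal.ofReal δ := add_le_add (hMaB T) (hMbB T)
    _ ≤ η := hδη
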